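/- Let f be a smooth real-valued function on an open interval I ⊆ ℝ with f'' nowhere vanishing. On the open set Ω = {(x,z,p,r) ∈ ℝ⁴ : x ∈ I}, define H(x,z,p,r) = r f'''(x)/f''(x) (the right-hand side of the third-order ODE Y''' = Y'' f'''(X)/f''(X)). Then the Wünschmann expression of H satisfies, at every point of Ω: 9 D²H_r − 27 D H_p − 18 H_r · D H_r + 18 H_p H_r + 4 H_r³ + 54 H_z = (40 f'''(x)³ − 45 f''(x) f'''(x) f''''(x) + 9 f''(x)² f'''''(x)) / f''(x)³. -/

import Mathlib

/-- Partial derivative of a function on `ℝ⁴` (coordinates `(x,z,p,r)` indexed `0,…,3`)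
in the `i`-th coordinate direction. -/
noncomputable def pd4 (i : Fin 4) (F : (Fin 4 → ℝ) → ℝ) (v : Fin 4 → ℝ) : ℝ :=
  fderiv ℝ F v (Pi.single i 1)

/-- The total derivative operator `D F = F_x + p F_z + r F_p + H F_r` on `ℝ⁴`. -/
noncomputable def Dop4 (H : (Fin 4 → ℝ) → ℝ) (F : (Fin 4 → ℝ) → ℝ) (v : Fin 4 → ℝ) : ℝ :=
  pd4 0 F v + v 2 * pd4 1 F v + v 3 * pd4 2 F v + H v * pd4 3 F v

/-- The Wünschmann expression
`W(H) = 9 D²H_r − 27 D H_p − 18 H_r D H_r + 18 H_p H_r + 4 H_r³ + 54 H_z`. -/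
noncomputable def wunschmann (H : (Fin 4 → ℝ) → ℝ) (v : Fin 4 → ℝ) : ℝ :=
  9 * Dop4 H (Dop4 H (pd4 3 H)) v - 27 * Dop4 H (pd4 2 H) v
    - 18 * pd4 3 H v * Dop4 H (pd4 3 H) v + 18 * pd4 2 H v * pd4 3 H v
    + 4 * (pd4 3 H v) ^ 3 + 54 * pd4 1 H v

/-- The Monge expression `M(f) = 40 f'''³ − 45 f'' f''' f'''' + 9 f''² f'''''`. -/
noncomputable def monge (f : ℝ → ℝ) (p : ℝ) : ℝ :=
  40 * (iteratedDeriv 3 f p) ^ 3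
    - 45 * iteratedDeriv 2 f p * iteratedDeriv 3 f p * iteratedDeriv 4 f p
    + 9 * (iteratedDeriv 2 f p) ^ 2 * iteratedDeriv 5 f p

-- helper: pd4 of a function of x only
lemma pd4_comp0 {u : ℝ → ℝ} {u' : ℝ} {v : Fin 4 → ℝ} (hu : HasDerivAt u u' (v 0)) (i : Fin 4) :
    pd4 i (fun w => u (w 0)) v = if i = 0 then u' else 0 := by
  have hproj : HasFDerivAt (fun w : Fin 4 → ℝ => w 0)
      (ContinuousLinearMap.proj 0 : (Fin 4 → ℝ) →L[ℝ] ℝ) v :=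
    (ContinuousLinearMap.proj 0 : (Fin 4 → ℝ) →L[ℝ] ℝ).hasFDerivAt
  have h := hu.comp_hasFDerivAt v hproj
  unfold pd4
  rw [show (fun w : Fin 4 → ℝ => u (w 0)) = u ∘ (fun w => w 0) from rfl, h.fderiv]
  simp [Pi.single_apply, eq_comm]

-- pd4 of H(w) = w 3 * u (w 0)
lemma pd4_rmul {u : ℝ → ℝ} {u' : ℝ} {v : Fin 4 → ℝ} (hu : HasDerivAt u u' (v 0)) (i : Fin 4) :
    pd4 i (fun w => w 3 * u (w 0)) v =
      if i = 0 then v 3 * u' else if i = 3 then u (v 0) else 0 := by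
  have hproj0 : HasFDerivAt (fun w : Fin 4 → ℝ => w 0)
      (ContinuousLinearMap.proj 0 : (Fin 4 → ℝ) →L[ℝ] ℝ) v :=
    (ContinuousLinearMap.proj 0 : (Fin 4 → ℝ) →L[ℝ] ℝ).hasFDerivAt
  have hproj3 : HasFDerivAt (fun w : Fin 4 → ℝ => w 3)
      (ContinuousLinearMap.proj 3 : (Fin 4 → ℝ) →L[ℝ] ℝ) v :=
    (ContinuousLinearMap.proj 3 : (Fin 4 → ℝ) →L[ℝ] ℝ).hasFDerivAt
  have hc : HasFDerivAt (fun w : Fin 4 → ℝ => u (w 0))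
      (u' • (ContinuousLinearMap.proj 0 : (Fin 4 → ℝ) →L[ℝ] ℝ)) v :=
    hu.comp_hasFDerivAt v hproj0
  have h := hproj3.mul hc
  unfold pd4
  rw [show (fun w : Fin 4 → ℝ => w 3 * u (w 0)) = ((fun w => w 3) * fun w => u (w 0)) from rfl,
    h.fderiv]
  fin_cases i <;>
    simp [Pi.single_apply, ContinuousLinearMap.proj_apply] <;> ring

lemma pd4_congr {F G : (Fin 4 → ℝ) → ℝ} {v : Fin 4 → ℝ} (h : F =ᶠ[nhds v] G) (i : Fin 4) :
    pd4 i F v = pd4 i G v := by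
  unfold pd4; rw [h.fderiv_eq]

/-- If `F` agrees on the open slab `{w | w 0 ∈ I}` with `u ∘ (· 0)`, then `Dop4 H F = u'` there. -/
lemma Dop4_comp0 {I : Set ℝ} (hI : IsOpen I) (H F : (Fin 4 → ℝ) → ℝ) {u u' : ℝ → ℝ}
    (hF : ∀ w : Fin 4 → ℝ, w 0 ∈ I → F w = u (w 0))
    (hu : ∀ x ∈ I, HasDerivAt u (u' x) x) :
    ∀ v : Fin 4 → ℝ, v 0 ∈ I → Dop4 H F v = u' (v 0) := by
  intro v hv
  have hopen : IsOpen {w : Fin 4 → ℝ | w 0 ∈ I} := hI.preimage (continuous_apply 0)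
  have hev : F =ᶠ[nhds v] fun w => u (w 0) :=
    Filter.eventually_of_mem (hopen.mem_nhds hv) hF
  have hpd : ∀ i : Fin 4, pd4 i F v = if i = 0 then u' (v 0) else 0 := fun i =>
    (pd4_congr hev i).trans (pd4_comp0 (hu (v 0) hv) i)
  simp only [Dop4, hpd]
  norm_num [show (1:Fin 4) ≠ 0 by decide, show (2:Fin 4) ≠ 0 by decide,
    show (3:Fin 4) ≠ 0 by decide]

lemma hasDerivAt_iteratedDeriv {I : Set ℝ} (hI : IsOpen I) {f : ℝ → ℝ}
    (hf : ContDiffOn ℝ (⊤ : ℕ∞) f I) (n : ℕ) :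
    ∀ x ∈ I, HasDerivAt (iteratedDeriv n f) (iteratedDeriv (n + 1) f x) x := by
  intro x hx
  have hW : ∀ m : ℕ, Set.EqOn (iteratedDerivWithin m f I) (iteratedDeriv m f) I := by
    intro m y hy
    rw [iteratedDerivWithin, iteratedDeriv, iteratedFDerivWithin_of_isOpen m hI hy]
  have hdiff : DifferentiableOn ℝ (iteratedDerivWithin n f I) I :=
    hf.differentiableOn_iteratedDerivWithin (by exact_mod_cast WithTop.coe_lt_top _)
      hI.uniqueDiffOn
  have hda : DifferentiableAt ℝ (iteratedDerivWithin n f I) x :=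
    (hdiff x hx).differentiableAt (hI.mem_nhds hx)
  have hval : deriv (iteratedDerivWithin n f I) x = iteratedDeriv (n + 1) f x := by
    rw [← hW (n + 1) hx, iteratedDerivWithin_succ,
      derivWithin_of_mem_nhds (hI.mem_nhds hx)]
  have h1 : HasDerivAt (iteratedDerivWithin n f I) (iteratedDeriv (n + 1) f x) x :=
    hval ▸ hda.hasDerivAt
  exact h1.congr_of_eventuallyEq
    (Filter.eventually_of_mem (hI.mem_nhds hx) fun y hy => (hW n hy).symm) |>.congr_deriv rfl

noncomputable def qq (f : ℝ → ℝ) (x : ℝ) : ℝ := iteratedDeriv 3 f x / iteratedDeriv 2 f x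

noncomputable def qq1 (f : ℝ → ℝ) (x : ℝ) : ℝ :=
  (iteratedDeriv 4 f x * iteratedDeriv 2 f x - iteratedDeriv 3 f x ^ 2) / iteratedDeriv 2 f x ^ 2

noncomputable def qq2 (f : ℝ → ℝ) (x : ℝ) : ℝ :=
  (iteratedDeriv 5 f x * iteratedDeriv 2 f x ^ 2
    - 3 * iteratedDeriv 2 f x * iteratedDeriv 3 f x * iteratedDeriv 4 f x
    + 2 * iteratedDeriv 3 f x ^ 3) / iteratedDeriv 2 f x ^ 3

/-- For the third-order ODE `Y''' = Y'' f'''(X)/f''(X)`, i.e.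
`H(x,z,p,r) = r f'''(x)/f''(x)` (with `f''` nonvanishing), the Wünschmann expression of `H`
equals `M(f)(x)/f''(x)³` at every point of `Ω = {(x,z,p,r) : x ∈ I}`. -/
theorem wunschmann_of_ODE_eq_monge
    (I : Set ℝ) (hI : IsOpen I) (hI' : Convex ℝ I)
    (f : ℝ → ℝ) (hf : ContDiffOn ℝ (⊤ : ℕ∞) f I)
    (hnd : ∀ x ∈ I, iteratedDeriv 2 f x ≠ 0) :
    ∀ v : Fin 4 → ℝ, v 0 ∈ I →
      wunschmann (fun v => v 3 * iteratedDeriv 3 f (v 0) / iteratedDeriv 2 f (v 0)) v =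
      monge f (v 0) / (iteratedDeriv 2 f (v 0)) ^ 3 := by
  have h2 := hasDerivAt_iteratedDeriv hI hf 2
  have h3 := hasDerivAt_iteratedDeriv hI hf 3
  have h4 := hasDerivAt_iteratedDeriv hI hf 4
  have hq : ∀ x ∈ I, HasDerivAt (qq f) (qq1 f x) x := by
    intro x hx
    have h := (h3 x hx).div (h2 x hx) (hnd x hx)
    refine h.congr_deriv ?_
    unfold qq1
    norm_num
    ring
  have hq1 : ∀ x ∈ I, HasDerivAt (qq1 f) (qq2 f x) x := by
    intro x hx
    have hc : HasDerivAt (fun y => iteratedDeriv 4 f y * iteratedDeriv 2 f y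
        - iteratedDeriv 3 f y ^ 2) (iteratedDeriv 5 f x * iteratedDeriv 2 f x
        + iteratedDeriv 4 f x * iteratedDeriv 3 f x
        - 2 * iteratedDeriv 3 f x ^ 1 * iteratedDeriv 4 f x) x :=
      ((h4 x hx).mul (h2 x hx)).sub ((h3 x hx).pow 2)
    have hd : HasDerivAt (fun y => iteratedDeriv 2 f y ^ 2)
        (2 * iteratedDeriv 2 f x ^ 1 * iteratedDeriv 3 f x) x := (h2 x hx).pow 2
    have h := hc.div hd (pow_ne_zero 2 (hnd x hx))
    refine h.congr_deriv ?_
    unfold qq2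
    have hne := hnd x hx
    field_simp
    ring
  intro v hv
  set H : (Fin 4 → ℝ) → ℝ :=
    fun v => v 3 * iteratedDeriv 3 f (v 0) / iteratedDeriv 2 f (v 0) with hH
  have hHeq : H = fun w => w 3 * qq f (w 0) := by
    funext w
    simp [hH, qq, mul_div_assoc]
  have hpd : ∀ w : Fin 4 → ℝ, w 0 ∈ I → ∀ i : Fin 4, pd4 i H w =
      if i = 0 then w 3 * qq1 f (w 0) else if i = 3 then qq f (w 0) else 0 := by
    intro w hw i
    rw [hHeq]
    exact pd4_rmul (hq (w 0) hw) i
  have hHr : ∀ w : Fin 4 → ℝ, w 0 ∈ I → pd4 3 H w = qq f (w 0) := by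
    intro w hw
    rw [hpd w hw 3]
    norm_num [show (3 : Fin 4) ≠ 0 by decide]
  have hHp : ∀ w : Fin 4 → ℝ, w 0 ∈ I → pd4 2 H w = (fun _ : ℝ => (0 : ℝ)) (w 0) := by
    intro w hw
    rw [hpd w hw 2]
    norm_num [show (2 : Fin 4) ≠ 0 by decide, show (2 : Fin 4) ≠ 3 by decide]
  have hHz : pd4 1 H v = 0 := by
    rw [hpd v hv 1]
    norm_num [show (1 : Fin 4) ≠ 0 by decide, show (1 : Fin 4) ≠ 3 by decide]
  have hA : ∀ w : Fin 4 → ℝ, w 0 ∈ I → Dop4 H (pd4 3 H) w = qq1 f (w 0) :=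
    Dop4_comp0 hI H (pd4 3 H) hHr hq
  have hB : Dop4 H (Dop4 H (pd4 3 H)) v = qq2 f (v 0) :=
    Dop4_comp0 hI H (Dop4 H (pd4 3 H)) hA hq1 v hv
  have hC : Dop4 H (pd4 2 H) v = 0 :=
    Dop4_comp0 hI H (pd4 2 H) hHp (fun x _ => hasDerivAt_const x 0) v hv
  unfold wunschmann
  rw [hB, hC, hHr v hv, hA v hv, hHp v hv, hHz]
  have hne := hnd (v 0) hv
  unfold qq qq1 qq2 monge
  field_simp
  ring
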